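/- arXiv:1007.5004 — 3 statements merged into one kernel-verified Lean document; each statement's English description precedes it below -/
import Mathlib

section
/- Let 0 < γ* ≤ β* and 0 < γ̃ < 1/(K-1) with K ≥ 2, where γ̃ maximizes φ(x) = f(x)(1-(K-1)x)/x on (0, 1/(K-1)). Suppose 1-(K-1)γ*β*-(K-2)β* > 0. Then the ratio r = [φ(γ̃)(1+β*)] / [(f(γ*)/γ*)(1-(K-1)γ*β*-(K-2)β*)] satisfies r ≥ 1; i.e., u_i(p̃) ≥ u_i^L: every transmitter prefers the operating point to being the Stackelberg leader. -/
open Set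

/-- Every transmitter prefers the operating point to being the Stackelberg leader:
φ(γ̃)(1+β*) / ((f(γ*)/γ*)(1-(K-1)γ*β*-(K-2)β*)) ≥ 1. -/
theorem stmt_3 (K : ℕ) (hK : 2 ≤ K) (f : ℝ → ℝ) (hfpos : ∀ x ∈ Ioi (0 : ℝ), 0 < f x)
    (φ : ℝ → ℝ) (hφ : ∀ x, φ x = f x * (1 - ((K : ℝ) - 1) * x) / x)
    (γs βs γt : ℝ) (hγs : 0 < γs) (hγβ : γs ≤ βs)
    (hγt : γt ∈ Ioo 0 (1 / ((K : ℝ) - 1)))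
    (hmax : ∀ x ∈ Ioo 0 (1 / ((K : ℝ) - 1)), φ x ≤ φ γt)
    (hden : 0 < 1 - ((K : ℝ) - 1) * γs * βs - ((K : ℝ) - 2) * βs) :
    1 ≤ φ γt * (1 + βs) /
      (f γs / γs * (1 - ((K : ℝ) - 1) * γs * βs - ((K : ℝ) - 2) * βs)) := by
  have hK1 : (1 : ℝ) ≤ (K : ℝ) - 1 := by
    have : (2 : ℝ) ≤ (K : ℝ) := by exact_mod_cast hK
    linarith
  have hK2 : (0 : ℝ) ≤ (K : ℝ) - 2 := by
    have : (2 : ℝ) ≤ (K : ℝ) := by exact_mod_cast hK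
    linarith
  have hβs : 0 < βs := lt_of_lt_of_le hγs hγβ
  have hfγ : 0 < f γs := hfpos γs hγs
  have hc : 0 < f γs / γs := div_pos hfγ hγs
  -- γs < 1/(K-1)
  have hγslt : γs < 1 / ((K : ℝ) - 1) := by
    by_contra h
    push_neg at h
    have h1 : 1 ≤ ((K : ℝ) - 1) * γs := by
      rw [div_le_iff₀ (by linarith : (0:ℝ) < (K:ℝ)-1)] at h
      nlinarith [h]
    nlinarith [mul_le_mul_of_nonneg_right h1 (le_of_lt hβs),
      mul_nonneg hK2 (le_of_lt hβs), mul_le_mul_of_nonneg_left hγβ (by linarith : (0:ℝ) ≤ (K:ℝ)-1)]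
  have hφs : φ γs ≤ φ γt := hmax γs ⟨hγs, hγslt⟩
  have hφγs : φ γs = f γs / γs * (1 - ((K : ℝ) - 1) * γs) := by
    rw [hφ]; ring
  have hNpos : 0 < f γs / γs * (1 - ((K : ℝ) - 1) * γs * βs - ((K : ℝ) - 2) * βs) :=
    mul_pos hc hden
  rw [le_div_iff₀ hNpos, one_mul]
  have key : f γs / γs * (1 - ((K : ℝ) - 1) * γs * βs - ((K : ℝ) - 2) * βs)
      ≤ φ γs * (1 + βs) := by
    rw [hφγs]
    nlinarith [mul_nonneg (mul_nonneg (le_of_lt hc) (sub_nonneg.2 hγβ)) (by linarith : (0:ℝ) ≤ (K:ℝ)-1)]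
  calc f γs / γs * (1 - ((K : ℝ) - 1) * γs * βs - ((K : ℝ) - 2) * βs)
      ≤ φ γs * (1 + βs) := key
    _ ≤ φ γt * (1 + βs) := mul_le_mul_of_nonneg_right hφs (by linarith)
end

section
/- Let f : [0,∞) → [0,1] be continuous with f(0) = 0, lim_{x→0+} f(x)/x = 0, f nondecreasing, f(β*) > 0 for a fixed β* > 0. For each K ≥ 2 let γ̃_K ∈ (0, 1/(K-1)] and γ*_K ∈ (0, β*]. Define φ_K(γ̃_K, β*) = (f(γ̃_K)/γ̃_K)(1-γ̃_K[(K-1)γ*_K + K-2]) - (f(β*)/β*)(1-β*[(K-1)γ*_K + K-2]). Then φ_K(γ̃_K,β*) → +∞ as K → ∞; in particular there exists K₀ such that for all K ≥ K₀, φ_K(γ̃_K,β*) > 0. -/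
open Set Filter

/-- The quantity φ_K(γ̃_K, β*) comparing the operating point with the Stackelberg follower
utility diverges to +∞ as K → ∞; in particular it is eventually positive. -/
theorem stmt_4 (f : ℝ → ℝ) (hfc : Continuous f) (hf0 : f 0 = 0)
    (hflim : Tendsto (fun x => f x / x) (nhdsWithin 0 (Ioi 0)) (nhds 0))
    (hfmono : MonotoneOn f (Ici 0)) (hfrange : ∀ x ∈ Ici (0 : ℝ), f x ∈ Icc (0 : ℝ) 1)
    (βs : ℝ) (hβs : 0 < βs) (hfβ : 0 < f βs)
    (γt γs : ℕ → ℝ)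
    (hγt : ∀ K : ℕ, 2 ≤ K → γt K ∈ Ioc 0 (1 / ((K : ℝ) - 1)))
    (hγs : ∀ K : ℕ, 2 ≤ K → γs K ∈ Ioc 0 βs)
    (Φ : ℕ → ℝ)
    (hΦ : ∀ K : ℕ, Φ K =
      f (γt K) / γt K * (1 - γt K * (((K : ℝ) - 1) * γs K + (K : ℝ) - 2)) -
      f βs / βs * (1 - βs * (((K : ℝ) - 1) * γs K + (K : ℝ) - 2))) :
    Tendsto Φ atTop atTop ∧ ∃ K₀ : ℕ, ∀ K : ℕ, K₀ ≤ K → 0 < Φ K := by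
  -- γt K → 0 within Ioi 0
  have h1 : Tendsto (fun K : ℕ => (K : ℝ) - 1) atTop atTop :=
    tendsto_atTop_add_const_right atTop (-1 : ℝ) tendsto_natCast_atTop_atTop
  have hup : Tendsto (fun K : ℕ => 1 / ((K : ℝ) - 1)) atTop (nhds 0) := by
    simpa [one_div, Pi.inv_def] using h1.inv_tendsto_atTop
  have hγt0 : Tendsto γt atTop (nhdsWithin 0 (Ioi 0)) := by
    apply tendsto_nhdsWithin_of_tendsto_nhds_of_eventually_within
    · apply tendsto_of_tendsto_of_tendsto_of_le_of_le' tendsto_const_nhds hup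
      · filter_upwards [eventually_ge_atTop 2] with K hK using (hγt K hK).1.le
      · filter_upwards [eventually_ge_atTop 2] with K hK using (hγt K hK).2
    · filter_upwards [eventually_ge_atTop 2] with K hK using (hγt K hK).1
  have hfq : Tendsto (fun K => f (γt K) / γt K) atTop (nhds 0) := hflim.comp hγt0
  have hfγ : Tendsto (fun K => f (γt K)) atTop (nhds 0) := by
    have := (hfc.tendsto 0).comp (hγt0.mono_right nhdsWithin_le_nhds)
    rwa [hf0] at this
  have key : ∀ᶠ K : ℕ in atTop,
      ((K : ℝ) - 2) * (f βs / 2) + (-1 - f βs / βs) ≤ Φ K := by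
    filter_upwards [eventually_ge_atTop 2,
      hfq.eventually (eventually_gt_nhds (by norm_num : (-1 : ℝ) < 0)),
      hfγ.eventually (eventually_lt_nhds (half_pos hfβ))] with K hK h1 h2
    have hKr : (2 : ℝ) ≤ (K : ℝ) := by exact_mod_cast hK
    have hγtpos := (hγt K hK).1
    have hγspos := (hγs K hK).1
    set A : ℝ := ((K : ℝ) - 1) * γs K + (K : ℝ) - 2 with hA
    have hAge : (K : ℝ) - 2 ≤ A := by nlinarith
    have hAnn : (0 : ℝ) ≤ A := by linarith
    have e1 : Φ K = (f (γt K) / γt K - f βs / βs) + A * (f βs - f (γt K)) := by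
      rw [hΦ]
      have hne : γt K ≠ 0 := ne_of_gt hγtpos
      have hbne : βs ≠ 0 := ne_of_gt hβs
      field_simp
      ring
    rw [e1]
    have h3 : ((K : ℝ) - 2) * (f βs / 2) ≤ A * (f βs - f (γt K)) := by nlinarith
    linarith
  have hlin : Tendsto (fun K : ℕ => ((K : ℝ) - 2) * (f βs / 2) + (-1 - f βs / βs))
      atTop atTop := by
    have h2 : Tendsto (fun K : ℕ => (K : ℝ) - 2) atTop atTop :=
      tendsto_atTop_add_const_right atTop (-2 : ℝ) tendsto_natCast_atTop_atTop
    exact tendsto_atTop_add_const_right atTop _ (h2.atTop_mul_const (half_pos hfβ))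
  have hmain : Tendsto Φ atTop atTop := tendsto_atTop_mono' atTop key hlin
  refine ⟨hmain, ?_⟩
  obtain ⟨K₀, hK₀⟩ := eventually_atTop.mp (hmain.eventually_gt_atTop 0)
  exact ⟨K₀, hK₀⟩
end

section
/- Let φ(x) = f(x)(1-(K-1)x)/x with f(x) = 1 - e^{-x} (i.e., M = 1) and K ≥ 2. The equation x[1-(K-1)x]f'(x) - f(x) = 0, i.e., x(1-(K-1)x)e^{-x} = 1-e^{-x}, has at most one solution in (0, 1/(K-1)). -/
open Set Real

lemma aux_strictMono (c : ℝ) (hc : 0 < c) :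
    StrictMonoOn (fun x : ℝ => Real.exp x - x + c * x ^ 2) (Ici 0) := by
  apply strictMonoOn_of_deriv_pos (convex_Ici 0)
  · fun_prop
  · intro x hx
    rw [interior_Ici] at hx
    have hx' : (0:ℝ) < x := hx
    have h1 : (1:ℝ) < Real.exp x := by
      have := Real.add_one_lt_exp (x := x) (by positivity)
      linarith
    have hd : HasDerivAt (fun x : ℝ => Real.exp x - x + c * x ^ 2)
        (Real.exp x - 1 + c * (2 * x ^ 1)) x :=
      ((Real.hasDerivAt_exp x).sub (hasDerivAt_id x)).add
        ((hasDerivAt_pow 2 x).const_mul c)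
    rw [hd.deriv]
    nlinarith

/-- For the efficiency function f(x) = 1 - e^{-x} (M = 1), the equation
x(1-(K-1)x)e^{-x} = 1 - e^{-x} has at most one solution in (0, 1/(K-1)). -/
theorem stmt_14 (K : ℕ) (hK : 2 ≤ K) :
    Set.Subsingleton {x : ℝ | x ∈ Ioo 0 (1 / ((K : ℝ) - 1)) ∧
      x * (1 - ((K : ℝ) - 1) * x) * Real.exp (-x) = 1 - Real.exp (-x)} := by
  set c : ℝ := (K : ℝ) - 1 with hcdef
  have hc : 0 < c := by
    have : (2:ℝ) ≤ (K:ℝ) := by exact_mod_cast hK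
    simp only [hcdef]; linarith
  intro a ha b hb
  obtain ⟨⟨ha0, _⟩, hea⟩ := ha
  obtain ⟨⟨hb0, _⟩, heb⟩ := hb
  have key : ∀ x : ℝ, x * (1 - c * x) * Real.exp (-x) = 1 - Real.exp (-x) →
      Real.exp x - x + c * x ^ 2 = 1 := by
    intro x hx
    have hpos := Real.exp_pos x
    rw [Real.exp_neg] at hx
    field_simp at hx
    nlinarith [hx]
  have hsm := aux_strictMono c hc
  exact hsm.injOn (le_of_lt ha0) (le_of_lt hb0)
    (by show Real.exp a - a + c * a ^ 2 = Real.exp b - b + c * b ^ 2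
        rw [key a hea, key b heb])
end
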